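/- (Case 2.4 of the greedy algorithm: surplus at BS 1 exceeds both its own residual storage capacity and BS 2's deficit.) Suppose 0 < α ≤ 1, 0 < β ≤ 1, (s₁,s₂) ∈ [0,S_max]², E₁ ≥ 0 > E₂, and −E₂ < β·(E₁ − (S_max − s₁)/α). Then the one-step minimal grid draw is V₁(s₁,s₂,E₁,E₂) = 0, and the supremum of the next-state storage sum (s₁ + α·c₁ − d₁) + (s₂ + α·c₂ − d₂) over one-step feasible actions with grid draw 0 equals S_max + min{S_max, s₂ + α·(β·(E₁ − (S_max − s₁)/α) + E₂)}. -/
import Mathlib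
set_option maxHeartbeats 800000


/-- A one-step feasible action at state `(s₁, s₂)` with net energies `(E₁, E₂)`. -/
def OneStep (α β Smax s₁ s₂ E₁ E₂ w₁ w₂ c₁ c₂ d₁ d₂ x₁₂ x₂₁ : ℝ) : Prop :=
  0 ≤ w₁ ∧ 0 ≤ w₂ ∧ 0 ≤ c₁ ∧ 0 ≤ c₂ ∧ 0 ≤ d₁ ∧ 0 ≤ d₂ ∧ 0 ≤ x₁₂ ∧ 0 ≤ x₂₁ ∧
  d₁ ≤ s₁ ∧ d₂ ≤ s₂ ∧
  0 ≤ s₁ + α * c₁ - d₁ ∧ s₁ + α * c₁ - d₁ ≤ Smax ∧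
  0 ≤ s₂ + α * c₂ - d₂ ∧ s₂ + α * c₂ - d₂ ≤ Smax ∧
  0 ≤ E₁ + w₁ - c₁ + α * d₁ - x₁₂ + β * x₂₁ ∧
  0 ≤ E₂ + w₂ - c₂ + α * d₂ - x₂₁ + β * x₁₂

/-- One-step minimal grid draw `V₁(s₁, s₂, E₁, E₂)`. -/
noncomputable def V1 (α β Smax s₁ s₂ E₁ E₂ : ℝ) : ℝ :=
  sInf {r : ℝ | ∃ w₁ w₂ c₁ c₂ d₁ d₂ x₁₂ x₂₁ : ℝ,
    OneStep α β Smax s₁ s₂ E₁ E₂ w₁ w₂ c₁ c₂ d₁ d₂ x₁₂ x₂₁ ∧ w₁ + w₂ = r}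

/-- Case 2.4: surplus at BS 1 exceeds both its residual storage
capacity and BS 2's deficit. -/
theorem case24_greedy
    (α β Smax : ℝ) (hα : 0 < α ∧ α ≤ 1) (hβ : 0 < β ∧ β ≤ 1) (hS : 0 < Smax)
    (s₁ s₂ : ℝ) (hs₁ : 0 ≤ s₁ ∧ s₁ ≤ Smax) (hs₂ : 0 ≤ s₂ ∧ s₂ ≤ Smax)
    (E₁ E₂ : ℝ) (hE₁ : 0 ≤ E₁) (hE₂ : E₂ < 0)
    (hsur : -E₂ < β * (E₁ - (Smax - s₁) / α)) :
    V1 α β Smax s₁ s₂ E₁ E₂ = 0 ∧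
      sSup {r : ℝ | ∃ w₁ w₂ c₁ c₂ d₁ d₂ x₁₂ x₂₁ : ℝ,
          OneStep α β Smax s₁ s₂ E₁ E₂ w₁ w₂ c₁ c₂ d₁ d₂ x₁₂ x₂₁ ∧
          w₁ + w₂ = 0 ∧
          (s₁ + α * c₁ - d₁) + (s₂ + α * c₂ - d₂) = r} =
        Smax + min Smax (s₂ + α * (β * (E₁ - (Smax - s₁) / α) + E₂)) := by
  obtain ⟨hα0, hα1⟩ := hα
  obtain ⟨hβ0, hβ1⟩ := hβ
  obtain ⟨hs10, hs11⟩ := hs₁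
  obtain ⟨hs20, hs21⟩ := hs₂
  set K : ℝ := (Smax - s₁) / α with hKdef
  have hKα : α * K = Smax - s₁ := by rw [hKdef]; field_simp
  have hK0 : 0 ≤ K := div_nonneg (by linarith) hα0.le
  have hT0 : 0 < β * (E₁ - K) + E₂ := by linarith
  have hE1K : K ≤ E₁ := by nlinarith
  -- the canonical feasible family of actions
  have feas : ∀ c₂ : ℝ, 0 ≤ c₂ → c₂ ≤ β * (E₁ - K) + E₂ → s₂ + α * c₂ ≤ Smax →
      OneStep α β Smax s₁ s₂ E₁ E₂ 0 0 K c₂ 0 0 (E₁ - K) 0 := by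
    intro c₂ hc0 hc1 hc2
    have hac : 0 ≤ α * c₂ := mul_nonneg hα0.le hc0
    unfold OneStep
    refine ⟨le_refl 0, le_refl 0, hK0, hc0, le_refl 0, le_refl 0, by linarith, le_refl 0,
      hs10, hs20, ?_, ?_, ?_, ?_, ?_, ?_⟩ <;> nlinarith
  constructor
  · -- V1 = 0
    have hmem0 : (0 : ℝ) ∈ {r : ℝ | ∃ w₁ w₂ c₁ c₂ d₁ d₂ x₁₂ x₂₁ : ℝ,
        OneStep α β Smax s₁ s₂ E₁ E₂ w₁ w₂ c₁ c₂ d₁ d₂ x₁₂ x₂₁ ∧ w₁ + w₂ = r} :=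
      ⟨0, 0, K, 0, 0, 0, E₁ - K, 0, feas 0 le_rfl hT0.le (by linarith), by ring⟩
    unfold V1
    apply le_antisymm
    · refine csInf_le ⟨0, ?_⟩ hmem0
      rintro r ⟨w₁, w₂, c₁, c₂, d₁, d₂, x₁₂, x₂₁, hf, hw⟩
      obtain ⟨h1, h2, -⟩ := hf
      linarith
    · refine le_csInf ⟨0, hmem0⟩ ?_
      rintro r ⟨w₁, w₂, c₁, c₂, d₁, d₂, x₁₂, x₂₁, hf, hw⟩
      obtain ⟨h1, h2, -⟩ := hf
      linarith
  · set T : ℝ := β * (E₁ - K) + E₂ with hTdef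
    have hαT : α * T = α * β * E₁ - β * (Smax - s₁) + α * E₂ := by
      have : α * T = α * β * E₁ - β * (α * K) + α * E₂ := by rw [hTdef]; ring
      rw [hKα] at this; exact this
    -- the value to achieve
    set c₂' : ℝ := min ((Smax - s₂) / α) T with hc2def
    have hc0 : 0 ≤ c₂' := le_min (div_nonneg (by linarith) hα0.le) hT0.le
    have hcT : c₂' ≤ T := min_le_right _ _
    have hcS : α * c₂' ≤ Smax - s₂ := by
      calc α * c₂' ≤ α * ((Smax - s₂) / α) :=
            mul_le_mul_of_nonneg_left (min_le_left _ _) hα0.le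
        _ = Smax - s₂ := by field_simp
    have hval : (s₁ + α * K - 0) + (s₂ + α * c₂' - 0) = Smax + min Smax (s₂ + α * T) := by
      rcases le_total ((Smax - s₂) / α) T with h | h
      · have h1 : Smax - s₂ ≤ α * T := by
          calc Smax - s₂ = α * ((Smax - s₂) / α) := by field_simp
            _ ≤ α * T := mul_le_mul_of_nonneg_left h hα0.le
        have h2 : α * c₂' = Smax - s₂ := by
          rw [hc2def, min_eq_left h]; field_simp
        rw [min_eq_left (by linarith)]
        linarith
      · have h1 : α * T ≤ Smax - s₂ := by
          calc α * T ≤ α * ((Smax - s₂) / α) := mul_le_mul_of_nonneg_left h hα0.le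
            _ = Smax - s₂ := by field_simp
        have h2 : α * c₂' = α * T := by rw [hc2def, min_eq_right h]
        rw [min_eq_right (by linarith)]
        linarith
    have hmem : Smax + min Smax (s₂ + α * T) ∈ {r : ℝ | ∃ w₁ w₂ c₁ c₂ d₁ d₂ x₁₂ x₂₁ : ℝ,
        OneStep α β Smax s₁ s₂ E₁ E₂ w₁ w₂ c₁ c₂ d₁ d₂ x₁₂ x₂₁ ∧
        w₁ + w₂ = 0 ∧
        (s₁ + α * c₁ - d₁) + (s₂ + α * c₂ - d₂) = r} :=
      ⟨0, 0, K, c₂', 0, 0, E₁ - K, 0, feas c₂' hc0 hcT (by linarith), by ring, hval⟩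
    have hub : ∀ r ∈ {r : ℝ | ∃ w₁ w₂ c₁ c₂ d₁ d₂ x₁₂ x₂₁ : ℝ,
        OneStep α β Smax s₁ s₂ E₁ E₂ w₁ w₂ c₁ c₂ d₁ d₂ x₁₂ x₂₁ ∧
        w₁ + w₂ = 0 ∧
        (s₁ + α * c₁ - d₁) + (s₂ + α * c₂ - d₂) = r},
        r ≤ Smax + min Smax (s₂ + α * T) := by
      rintro r ⟨w₁, w₂, c₁, c₂, d₁, d₂, x₁₂, x₂₁, hf, hw, hr⟩
      obtain ⟨hw1, hw2, hc1, hc2, hd1, hd2, hx12, hx21, hds1, hds2,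
        hn10, hn11, hn20, hn21, hb1, hb2⟩ := hf
      have hw1' : w₁ = 0 := le_antisymm (by linarith) hw1
      have hw2' : w₂ = 0 := le_antisymm (by linarith) hw2
      subst hw1'; subst hw2'
      rcases le_total Smax (s₂ + α * T) with h | h
      · rw [min_eq_left h]; linarith
      · rw [min_eq_right h]
        have hA : 0 ≤ α * β * (E₁ + 0 - c₁ + α * d₁ - x₁₂ + β * x₂₁) :=
          mul_nonneg (mul_nonneg hα0.le hβ0.le) hb1
        have hB : 0 ≤ α * (E₂ + 0 - c₂ + α * d₂ - x₂₁ + β * x₁₂) :=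
          mul_nonneg hα0.le hb2
        have hC : 0 ≤ (1 - β) * (Smax - (s₁ + α * c₁ - d₁)) :=
          mul_nonneg (by linarith) (by linarith)
        have hD : 0 ≤ β * (1 - α ^ 2) * d₁ :=
          mul_nonneg (mul_nonneg hβ0.le (by nlinarith)) hd1
        have hE : 0 ≤ (1 - α ^ 2) * d₂ := mul_nonneg (by nlinarith) hd2
        have hF : 0 ≤ α * (1 - β ^ 2) * x₂₁ :=
          mul_nonneg (mul_nonneg hα0.le (by nlinarith)) hx21
        linarith [hA, hB, hC, hD, hE, hF, hαT]
    exact le_antisymm (csSup_le ⟨_, hmem⟩ hub) (le_csSup ⟨_, hub⟩ hmem)
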